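/- Let f and g be polynomials with real coefficients of degrees q and r respectively with r < q, having no common zero, and let I = (a,b) be a nonempty open interval such that for every μ ∈ I all complex roots of the polynomial f - μg are real. Then for every real λ with g(λ) ≠ 0 and f(λ)/g(λ) ∈ I, one has f'(λ)g(λ) - f(λ)g'(λ) ≠ 0. -/

import Mathlib

open Polynomial

lemma real_roots_decomp (p : Polynomial ℝ) (hp : p ≠ 0)
    (h : ∀ z : ℂ, Polynomial.aeval z p = 0 → z.im = 0) :
    ∃ R : Multiset ℝ, Multiset.card R = p.natDegree ∧
      p = C p.leadingCoeff * (R.map fun r => X - C r).prod := by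
  set pc := p.map (algebraMap ℝ ℂ) with hpc
  have hinj : Function.Injective (algebraMap ℝ ℂ) := RingHom.injective _
  have hpc0 : pc ≠ 0 := fun h0 => hp ((Polynomial.map_eq_zero_iff hinj).mp h0)
  have hsplit : Splits pc := IsAlgClosed.splits pc
  have hprod := hsplit.eq_prod_roots
  have hroots_real : ∀ z ∈ pc.roots, ((z.re : ℂ)) = z := by
    intro z hz
    have hz0 : Polynomial.aeval z p = 0 := by
      have := (mem_roots hpc0).mp hz
      rwa [hpc, IsRoot, eval_map, ← aeval_def] at this
    have := h z hz0
    apply Complex.ext <;> simp [this]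
  refine ⟨pc.roots.map Complex.re, ?_, ?_⟩
  · rw [Multiset.card_map, splits_iff_card_roots.mp hsplit, hpc, natDegree_map]
  · apply map_injective (algebraMap ℝ ℂ) hinj
    have hmm : Multiset.map (fun z => map (algebraMap ℝ ℂ) (X - C z))
          (pc.roots.map Complex.re) = pc.roots.map fun z => X - C z := by
      rw [Multiset.map_map]
      apply Multiset.map_congr rfl
      intro z hz
      simp only [Function.comp_apply, Polynomial.map_sub, map_C, map_X]
      rw [show (algebraMap ℝ ℂ) z.re = ((z.re : ℂ)) from rfl, hroots_real z hz]
    calc map (algebraMap ℝ ℂ) p = pc := hpc.symm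
      _ = C pc.leadingCoeff * (pc.roots.map fun z => X - C z).prod := hprod
      _ = map (algebraMap ℝ ℂ)
            (C p.leadingCoeff * ((pc.roots.map Complex.re).map fun r => X - C r).prod) := by
          rw [Polynomial.map_mul, map_C, Polynomial.map_multiset_prod, Multiset.map_map]
          congr 1
          · rw [hpc, leadingCoeff_map]
          · rw [← hmm]
            congr 1

lemma deriv_identity (x : ℝ) (R : Multiset ℝ) (hx : ∀ r ∈ R, x - r ≠ 0) :
    (eval x (derivative ((R.map fun r => X - C r).prod)))^2
      - eval x ((R.map fun r => X - C r).prod) *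
        eval x (derivative (derivative ((R.map fun r => X - C r).prod)))
    = (eval x ((R.map fun r => X - C r).prod))^2
        * (R.map fun r => ((x - r)^2)⁻¹).sum := by
  induction R using Multiset.induction with
  | empty => simp
  | cons a S ih =>
    have ha : x - a ≠ 0 := hx a (Multiset.mem_cons_self a S)
    have ihS := ih (fun r hr => hx r (Multiset.mem_cons_of_mem hr))
    set Q := (S.map fun r => X - C r).prod with hQ
    have hprod : ((a ::ₘ S).map fun r => X - C r).prod = (X - C a) * Q := by
      rw [Multiset.map_cons, Multiset.prod_cons]
    rw [hprod, Multiset.map_cons, Multiset.sum_cons]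
    set q0 := eval x Q
    set q1 := eval x (derivative Q)
    set q2 := eval x (derivative (derivative Q))
    have e1 : eval x (derivative ((X - C a) * Q)) = q0 + (x - a) * q1 := by
      simp [derivative_mul, q0, q1]; try ring
    have e2 : eval x (derivative (derivative ((X - C a) * Q)))
        = 2 * q1 + (x - a) * q2 := by
      simp [derivative_mul, derivative_add, q1, q2]; try ring
    have e0 : eval x ((X - C a) * Q) = (x - a) * q0 := by simp [q0]
    rw [e0, e1, e2]
    have expand : (q0 + (x - a) * q1)^2 - (x - a) * q0 * (2 * q1 + (x - a) * q2)
        = q0^2 + (x-a)^2 * (q1^2 - q0 * q2) := by ring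
    rw [expand, ihS]
    field_simp

lemma pow_card_le_prod_real (M : Multiset ℝ) (c : ℝ) (hc : 0 ≤ c)
    (h : ∀ x ∈ M, c ≤ x) : c ^ Multiset.card M ≤ M.prod := by
  induction M using Multiset.induction with
  | empty => simp
  | cons a s ih =>
    have hca := h a (Multiset.mem_cons_self a s)
    have ihs := ih (fun x hx => h x (Multiset.mem_cons_of_mem hx))
    rw [Multiset.prod_cons, Multiset.card_cons, pow_succ, mul_comm (c ^ Multiset.card s) c]
    exact mul_le_mul hca ihs (by positivity) (le_trans hc hca)

set_option maxHeartbeats 1000000 in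
theorem stmt_18 (f g : Polynomial ℝ) (q r : ℕ) (hq : 1 ≤ q)
    (hdegf : f.natDegree = q) (hdegg : g.natDegree = r) (hrq : r < q)
    (hcoprime : ∀ z : ℂ, ¬ (Polynomial.aeval z f = 0 ∧ Polynomial.aeval z g = 0))
    (a b : ℝ) (hab : a < b)
    (hreal : ∀ μ ∈ Set.Ioo a b, ∀ z : ℂ,
      Polynomial.aeval z f = (μ : ℂ) * Polynomial.aeval z g → z.im = 0) :
    ∀ l : ℝ, g.eval l ≠ 0 → f.eval l / g.eval l ∈ Set.Ioo a b →
      f.derivative.eval l * g.eval l - f.eval l * g.derivative.eval l ≠ 0 := by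
  intro l hgl hmem hW
  obtain ⟨ha0, hb0⟩ := hmem
  set μ0 : ℝ := f.eval l / g.eval l with hμ0
  set G : ℝ := g.eval l with hG
  set G' : ℝ := (derivative g).eval l with hG'
  set G'' : ℝ := (derivative (derivative g)).eval l with hG''
  set F : ℝ := f.eval l with hF
  set F' : ℝ := (derivative f).eval l with hF'
  set F'' : ℝ := (derivative (derivative f)).eval l with hF''
  have hFval : F = μ0 * G := by rw [hμ0]; field_simp
  have hF'val : F' = μ0 * G' := by
    rw [hμ0]; field_simp; linarith [hW]
  set H'' : ℝ := F'' - μ0 * G'' with hH''def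
  set A : ℝ := G'^2 - G * G'' with hA
  have hf0 : f ≠ 0 := by
    intro h0; rw [h0, natDegree_zero] at hdegf; omega
  set L : ℝ := f.leadingCoeff with hL
  have hL0 : L ≠ 0 := leadingCoeff_ne_zero.mpr hf0
  have hdegfd : f.degree = (q : ℕ) := by
    rw [degree_eq_natDegree hf0, hdegf]
  have hG2 : (0:ℝ) < G^2 := by positivity
  -- the key consequence for each admissible perturbation t
  have key : ∀ t : ℝ, t ≠ 0 → μ0 + t ∈ Set.Ioo a b →
      ∃ S : ℝ, 0 ≤ S ∧
        t^2*G'^2 + t*G*H'' - t^2*G*G'' = (t*G)^2 * S ∧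
        (∀ c : ℝ, 0 < c → (t*G/L)^2 < c^q → c⁻¹ < S) := by
    intro t ht htmem
    set p : Polynomial ℝ := f - C (μ0 + t) * g with hp
    have hdegCg : (C (μ0 + t) * g).degree < f.degree := by
      calc (C (μ0 + t) * g).degree ≤ g.degree := by
              calc (C (μ0 + t) * g).degree ≤ (C (μ0+t)).degree + g.degree := degree_mul_le _ _
                _ ≤ 0 + g.degree := add_le_add_left (degree_C_le) _
                _ = g.degree := by rw [zero_add]
        _ ≤ (r : ℕ) := hdegg ▸ degree_le_natDegree
        _ < (q : ℕ) := by exact_mod_cast hrq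
        _ = f.degree := hdegfd.symm
    have hpdeg : p.degree = (q : ℕ) := by
      rw [hp, degree_sub_eq_left_of_degree_lt hdegCg, hdegfd]
    have hp0 : p ≠ 0 := by
      intro h0; rw [h0, degree_zero] at hpdeg; exact (by simp at hpdeg)
    have hpnat : p.natDegree = q := natDegree_eq_of_degree_eq_some hpdeg
    have hplead : p.leadingCoeff = L := by
      rw [hp, leadingCoeff_sub_of_degree_lt hdegCg]
    have hproots : ∀ z : ℂ, Polynomial.aeval z p = 0 → z.im = 0 := by
      intro z hz
      apply hreal (μ0 + t) htmem z
      have : Polynomial.aeval z p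
          = Polynomial.aeval z f - ((μ0 + t : ℝ) : ℂ) * Polynomial.aeval z g := by
        simp [hp]
      rw [this] at hz
      push_cast at hz ⊢
      linear_combination hz
    obtain ⟨R, hcard, hfact⟩ := real_roots_decomp p hp0 hproots
    rw [hpnat] at hcard
    rw [hplead] at hfact
    -- evaluations of p and its derivatives at l
    have ep0 : eval l p = -(t*G) := by
      have h1 : eval l p = F - (μ0 + t) * G := by simp [hp, hF, hG]
      rw [h1, hFval]; ring
    have ep1 : eval l (derivative p) = -(t*G') := by
      have h1 : derivative p = derivative f - C (μ0 + t) * derivative g := by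
        rw [hp]; simp [derivative_sub]
      have h2 : eval l (derivative p) = F' - (μ0 + t) * G' := by
        rw [h1]; simp [hF', hG']
      rw [h2, hF'val]; ring
    have ep2 : eval l (derivative (derivative p)) = H'' - t*G'' := by
      have h1 : derivative (derivative p)
          = derivative (derivative f) - C (μ0 + t) * derivative (derivative g) := by
        rw [hp]; simp [derivative_sub]
      have h2 : eval l (derivative (derivative p)) = F'' - (μ0 + t) * G'' := by
        rw [h1]; simp [hF'', hG'']
      rw [h2, hH''def]; ring
    have htG : t * G ≠ 0 := mul_ne_zero ht hgl
    -- roots avoid l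
    have hx : ∀ s ∈ R, l - s ≠ 0 := by
      intro s hs h0
      have : eval l p = 0 := by
        rw [hfact, eval_mul, eval_multiset_prod, Multiset.map_map]
        apply mul_eq_zero_of_right
        apply Multiset.prod_eq_zero
        refine Multiset.mem_map.mpr ⟨s, hs, ?_⟩
        simp [sub_eq_zero.mp h0]
      rw [ep0] at this
      exact htG (by linarith)
    set P := (R.map fun s => X - C s).prod with hP
    have m0 : L * eval l P = -(t*G) := by
      have : eval l p = L * eval l P := by rw [hfact]; simp
      rw [ep0] at this; linarith
    have m1 : L * eval l (derivative P) = -(t*G') := by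
      have hd : derivative p = C L * derivative P := by
        rw [hfact]; simp
      have := congrArg (eval l) hd
      rw [ep1] at this; simp at this; linarith
    have m2 : L * eval l (derivative (derivative P)) = H'' - t*G'' := by
      have hd : derivative (derivative p) = C L * derivative (derivative P) := by
        rw [hfact]; simp
      have := congrArg (eval l) hd
      rw [ep2] at this; simp at this; linarith
    have hid := deriv_identity l R hx
    rw [← hP] at hid
    set S : ℝ := (R.map fun s => ((l - s)^2)⁻¹).sum with hS
    have hSnn : 0 ≤ S := by
      apply Multiset.sum_nonneg
      intro x hxm
      obtain ⟨s, _, rfl⟩ := Multiset.mem_map.mp hxm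
      positivity
    refine ⟨S, hSnn, ?_, ?_⟩
    · linear_combination (L^2) * hid
        + (t*G' - L * eval l (derivative P)) * m1
        + (L * eval l (derivative (derivative P))) * m0
        + (-(t*G)) * m2
        + S * (L * eval l P - t*G) * m0
    · intro c hc hsmall
      by_cases hall : ∀ s ∈ R, c ≤ (l - s)^2
      · exfalso
        have hle : c ^ q ≤ (R.map fun s => (l - s)^2).prod := by
          have := pow_card_le_prod_real (R.map fun s => (l - s)^2) c hc.le ?_
          · rwa [Multiset.card_map, hcard] at this
          · intro x hxm
            obtain ⟨s, hsm, rfl⟩ := Multiset.mem_map.mp hxm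
            exact hall s hsm
        have hprodval : (R.map fun s => (l - s)^2).prod = (t*G/L)^2 := by
          have h0 : (R.map fun s => (l - s)^2).prod
              = (R.map fun s => (l - s)*(l - s)).prod := by
            congr 1
            apply Multiset.map_congr rfl
            intro s _; ring
          have h1 : (R.map fun s => (l - s)*(l - s)).prod
              = ((R.map fun s => l - s).prod) * ((R.map fun s => l - s).prod) :=
            Multiset.prod_map_mul
          have h2 : (R.map fun s => l - s).prod = eval l P := by
            rw [hP, eval_multiset_prod, Multiset.map_map]
            congr 1
            apply Multiset.map_congr rfl
            intro s _; simp
          have h3 : eval l P = -(t*G)/L := by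
            rw [eq_div_iff hL0]; linear_combination m0
          rw [h0, h1, h2, h3]
          field_simp
        rw [hprodval] at hle
        linarith
      · push_neg at hall
        obtain ⟨s, hsm, hslt⟩ := hall
        have hs0 : (0:ℝ) < (l - s)^2 := by
          have := hx s hsm; positivity
        have hterm : ((l - s)^2)⁻¹ ≤ S := by
          apply Multiset.single_le_sum
          · intro x hxm
            obtain ⟨u, _, rfl⟩ := Multiset.mem_map.mp hxm
            positivity
          · exact Multiset.mem_map.mpr ⟨s, hsm, rfl⟩
        have : c⁻¹ < ((l - s)^2)⁻¹ := inv_strictAnti₀ hs0 hslt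
        linarith
  -- two cases depending on H''
  by_cases hH : H'' = 0
  · -- case of a root of multiplicity ≥ 3
    set c : ℝ := G^2 / (|A| + G^2) with hc
    have hden : (0:ℝ) < |A| + G^2 := by positivity
    have hcpos : 0 < c := div_pos hG2 hden
    set D : ℝ := c^q * L^2 / G^2 with hD
    have hDpos : 0 < D := by positivity
    set t : ℝ := min ((b - μ0)/2) (Real.sqrt D / 2) with ht
    have htpos : 0 < t := lt_min (by linarith) (by positivity)
    have htmem : μ0 + t ∈ Set.Ioo a b := by
      have h1 : t ≤ (b - μ0)/2 := min_le_left _ _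
      exact ⟨by linarith, by linarith⟩
    have htsq : t^2 < D := by
      have h1 : t ≤ Real.sqrt D / 2 := min_le_right _ _
      have h2 : 0 < Real.sqrt D := Real.sqrt_pos.mpr hDpos
      nlinarith [Real.sq_sqrt hDpos.le]
    obtain ⟨S, hSnn, heq, hclose⟩ := key t (ne_of_gt htpos) htmem
    have hsmall : (t*G/L)^2 < c^q := by
      have hDG : D * G^2 = c^q * L^2 := by
        rw [hD]; field_simp
      have h1 : (t*G/L)^2 = t^2 * G^2 / L^2 := by
        field_simp
      rw [h1, div_lt_iff₀ (by positivity)]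
      nlinarith [htsq, hG2]
    have hSgt := hclose c hcpos hsmall
    have hcinv : c⁻¹ = (|A| + G^2)/G^2 := by rw [hc, inv_div]
    rw [hcinv] at hSgt
    have hA1 : t^2 * A = (t*G)^2 * S := by
      rw [hA]; linear_combination heq + (-(t*G))*hH
    have ht2 : (0:ℝ) < t^2 := by positivity
    have s1 : |A| + G^2 < S * G^2 := (div_lt_iff₀ hG2).mp hSgt
    have s1' : A < G^2 * S := by nlinarith [le_abs_self A]
    have s2 : t^2 * A < t^2 * (G^2 * S) := (mul_lt_mul_iff_right₀ ht2).mpr s1'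
    have s3 : (t*G)^2 * S = t^2 * (G^2 * S) := by ring
    linarith [hA1, s2, s3]
  · -- case of a double root: pick the sign of t to contradict positivity
    have hGH : G * H'' ≠ 0 := mul_ne_zero hgl hH
    have hGHpos : 0 < |G * H''| := abs_pos.mpr hGH
    set δ : ℝ := min (min ((b - μ0)/2) ((μ0 - a)/2)) (|G*H''| / (2*(|A|+1))) with hδ
    have hδpos : 0 < δ := by
      apply lt_min (lt_min (by linarith) (by linarith))
      apply div_pos hGHpos (by positivity)
    set t : ℝ := if 0 < G * H'' then -δ else δ with htdef
    have ht0 : t ≠ 0 := by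
      rw [htdef]; split
      · exact neg_ne_zero.mpr (ne_of_gt hδpos)
      · exact ne_of_gt hδpos
    have htmem : μ0 + t ∈ Set.Ioo a b := by
      have h1 : δ ≤ (b - μ0)/2 := le_trans (min_le_left _ _) (min_le_left _ _)
      have h2 : δ ≤ (μ0 - a)/2 := le_trans (min_le_left _ _) (min_le_right _ _)
      have hb : -δ ≤ t ∧ t ≤ δ := by
        rw [htdef]; split <;> constructor <;> linarith
      exact ⟨by linarith [hb.1], by linarith [hb.2]⟩
    obtain ⟨S, hSnn, heq, _⟩ := key t ht0 htmem
    have hsign : t * (G*H'') = -(δ * |G*H''|) := by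
      rw [htdef]; split
      · rename_i h; rw [abs_of_pos h]; ring
      · rename_i h
        have hneg : G*H'' < 0 := lt_of_le_of_ne (not_lt.mp h) hGH
        rw [abs_of_neg hneg]; ring
    have hδ3 : δ ≤ |G*H''|/(2*(|A|+1)) := min_le_right _ _
    have ht2 : t^2 = δ^2 := by rw [htdef]; split <;> ring
    have e3 : δ^2*|A| < δ*|G*H''| := by
      have hAd : (0:ℝ) < 2*(|A|+1) := by positivity
      have step : δ*|A| < |G*H''| := by
        have h5 : δ*|A| ≤ (|G*H''|/(2*(|A|+1)))*|A| :=
          mul_le_mul_of_nonneg_right hδ3 (abs_nonneg A)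
        have h6 : (|G*H''|/(2*(|A|+1)))*|A| < |G*H''| := by
          rw [div_mul_eq_mul_div, div_lt_iff₀ hAd]
          nlinarith [abs_nonneg A, hGHpos]
        linarith
      calc δ^2*|A| = δ*(δ*|A|) := by ring
        _ < δ*|G*H''| := (mul_lt_mul_iff_right₀ hδpos).mpr step
    have hlhs : t^2*G'^2 + t*G*H'' - t^2*G*G'' < 0 := by
      have e1 : t^2*G'^2 - t^2*G*G'' = δ^2 * A := by rw [ht2, hA]; ring
      have e2 : δ^2*A ≤ δ^2*|A| := by nlinarith [le_abs_self A, sq_nonneg δ]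
      have e4 : t*G*H'' = -(δ*|G*H''|) := by rw [← hsign]; ring
      linarith
    have hrhs : (0:ℝ) ≤ (t*G)^2 * S := by positivity
    linarith [heq]
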